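/- Let x be a chain-point for the chain V_0 ⊊ V_1 ⊊ … ⊊ V_k, let a, b ∈ ℕ with 0 ≤ a ≤ b ≤ k+1, and set S := L_a ∪ L_{a+1} ∪ … ∪ L_b. Then |S| − 2 < x(E(S)) ≤ |S| − 1. -/

import Mathlib

set_option linter.unusedSectionVars false


open Finset
open scoped Classical

variable {V : Type*} [Fintype V]

/-- The set of edges of `G` with one endpoint in `S₁` and the other in `S₂`. -/
noncomputable def cutBetween (G : SimpleGraph V) (S₁ S₂ : Finset V) : Finset (Sym2 V) :=
  G.edgeFinset.filter (fun e => ∃ u v, e = s(u, v) ∧ u ∈ S₁ ∧ v ∈ S₂)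

/-- The cut `δ(S)`: edges of `G` with exactly one endpoint in `S`. -/
noncomputable def cut (G : SimpleGraph V) (S : Finset V) : Finset (Sym2 V) :=
  cutBetween G S Sᶜ

/-- `E(S)`: edges of `G` with both endpoints in `S`. -/
noncomputable def inducedEdges (G : SimpleGraph V) (S : Finset V) : Finset (Sym2 V) :=
  G.edgeFinset.filter (fun e => ∀ v ∈ e, v ∈ S)

/-- `T` is the edge set of a spanning tree of `G`. -/
def IsSpanningTree (G : SimpleGraph V) (T : Finset (Sym2 V)) : Prop :=
  (T : Set (Sym2 V)) ⊆ G.edgeSet ∧ (SimpleGraph.fromEdgeSet (T : Set (Sym2 V))).IsTree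

/-- Characteristic vector of a set of edges. -/
noncomputable def chi (T : Finset (Sym2 V)) : Sym2 V → ℝ :=
  fun e => if e ∈ T then 1 else 0

/-- The spanning tree polytope `Sp(G)`. -/
noncomputable def spanningTreePolytope (G : SimpleGraph V) : Set (Sym2 V → ℝ) :=
  convexHull ℝ {x | ∃ T : Finset (Sym2 V), IsSpanningTree G T ∧ x = chi T}

/-- The level sets `L_i = V_i \ V_{i-1}` of a chain `V_0 ⊊ … ⊊ V_k` (with `V_{-1} = ∅`,
`V_{k+1} = V`). -/
noncomputable def level (Vc : ℕ → Finset V) (k : ℕ) : ℕ → Finset V :=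
  fun i => if i = 0 then Vc 0 else if i ≤ k then Vc i \ Vc (i - 1) else Finset.univ \ Vc k

/-- `x` is a chain-point for the chain `V_0 ⊊ … ⊊ V_k`. -/
def IsChainPoint (G : SimpleGraph V) (Vc : ℕ → Finset V) (k : ℕ) (x : Sym2 V → ℝ) : Prop :=
  x ∈ spanningTreePolytope G ∧
  (∑ e ∈ cut G (Vc 0), x e) = 1 ∧
  (∑ e ∈ cut G (Vc k), x e) = 1 ∧
  (∀ i, 1 ≤ i → i ≤ k - 1 → (∑ e ∈ cut G (Vc i), x e) < 2) ∧
  (∀ i, 1 ≤ i → i ≤ k →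
    (∑ v ∈ level Vc k i, ∑ e ∈ cut G {v}, x e) = 2 * ((level Vc k i).card : ℝ))

/-- A Gao-tree for the chain `V_0 ⊊ … ⊊ V_k`: a spanning tree meeting each cut `δ(V_i)`
in exactly one edge. -/
def IsGaoTree (G : SimpleGraph V) (Vc : ℕ → Finset V) (k : ℕ) (T : Finset (Sym2 V)) : Prop :=
  IsSpanningTree G T ∧ ∀ i ≤ k, (T ∩ cut G (Vc i)).card = 1

/-- A Gao-tree for the subchain of `V_0 ⊊ … ⊊ V_k` given by the index set `I`. -/
def IsGaoTreeOn (G : SimpleGraph V) (Vc : ℕ → Finset V) (I : Finset ℕ)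
    (T : Finset (Sym2 V)) : Prop :=
  IsSpanningTree G T ∧ ∀ i ∈ I, (T ∩ cut G (Vc i)).card = 1

/-- `Sp_𝒞(G)`: the convex hull of characteristic vectors of Gao-trees. -/
noncomputable def gaoPolytope (G : SimpleGraph V) (Vc : ℕ → Finset V) (k : ℕ) :
    Set (Sym2 V → ℝ) :=
  convexHull ℝ {x | ∃ T : Finset (Sym2 V), IsGaoTree G Vc k T ∧ x = chi T}

/-- `F` is the edge set of a spanning tree of the induced subgraph `G(U)`. -/
def IsSpanningTreeOfInduced (G : SimpleGraph V) (U : Finset V) (F : Finset (Sym2 V)) : Prop :=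
  (F : Set (Sym2 V)) ⊆ G.edgeSet ∧ (∀ e ∈ F, ∀ v ∈ e, v ∈ U) ∧
  F.card = U.card - 1 ∧
  ∀ u ∈ U, ∀ v ∈ U, (SimpleGraph.fromEdgeSet (F : Set (Sym2 V))).Reachable u v

/-- The rank of `X` in the cycle matroid of `G`. -/
noncomputable def cycleRank (G : SimpleGraph V) (X : Finset (Sym2 V)) : ℕ :=
  (G.edgeFinset.powerset.filter (fun T => IsSpanningTree G T)).sup (fun T => (T ∩ X).card)

/-- The rank of `X` in the matroid whose bases are the Gao-trees. -/
noncomputable def gaoRank (G : SimpleGraph V) (Vc : ℕ → Finset V) (k : ℕ)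
    (X : Finset (Sym2 V)) : ℕ :=
  (G.edgeFinset.powerset.filter (fun T => IsGaoTree G Vc k T)).sup (fun T => (T ∩ X).card)

/-- `x` is a solution of the `s`–`t` path TSP subtour elimination LP. -/
def IsSubtourLPSolution (G : SimpleGraph V) (s t : V) (x : Sym2 V → ℝ) : Prop :=
  x ∈ spanningTreePolytope G ∧
  (∀ v, v ≠ s → v ≠ t → (∑ e ∈ cut G {v}, x e) = 2) ∧
  (∑ e ∈ cut G {s}, x e) = 1 ∧ (∑ e ∈ cut G {t}, x e) = 1

/-- Rank function of a matroid on a finite ground set, as a function on finsets. -/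
noncomputable def mrank {E : Type*} [Fintype E] (M : Matroid E) (X : Finset E) : ℕ :=
  (X.powerset.filter (fun I : Finset E => M.Indep (I : Set E))).sup Finset.card

/-- Convex hull of characteristic vectors of independent sets of a matroid. -/
noncomputable def indepPolytope {E : Type*} [Fintype E] (M : Matroid E) : Set (E → ℝ) :=
  convexHull ℝ {x | ∃ I : Finset E, M.Indep (I : Set E) ∧
    x = fun e => if e ∈ I then (1 : ℝ) else 0}
open SimpleGraph Walk in
lemma tree_card_edges_in (H : SimpleGraph V) (hH : H.IsTree) {S : Finset V} {r : V} (hr : r ∈ S)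
    (A : Finset (Sym2 V))
    (hA : ∀ e ∈ A, e ∈ H.edgeSet ∧ ∀ v ∈ e, v ∈ S) :
    A.card + 1 ≤ S.card := by
  classical
  choose f hf hf' using (hH.existsUnique_path · r)
  have key : ∀ x y, H.Adj x y → (f x).length ≤ (f y).length →
      y ≠ r ∧ (f y).getVert 1 = x := by
    intro x y h h'
    have hyr : y ≠ r := by
      rintro rfl
      rw [← hf' _ nil IsPath.nil, length_nil,
          ← hf' _ (.cons h .nil) (IsPath.nil.cons <| by simpa using h.ne),
          length_cons, length_nil] at h'
      simp [Nat.le_zero, Nat.one_ne_zero] at h'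
    refine ⟨hyr, ?_⟩
    have hfy : f y = .cons h.symm (f x) := by
      refine (hf' _ (.cons h.symm (f x)) ((cons_isPath_iff _ _).2 ⟨hf _, fun hy => ?contra⟩)).symm
      case contra =>
        suffices (f x).takeUntil y hy = .cons h .nil by
          rw [← take_spec _ hy] at h'
          simp [this, hf' _ _ ((hf _).dropUntil hy)] at h'
        refine (hH.existsUnique_path _ _).unique ((hf _).takeUntil _) ?_
        simp [h.ne]
    rw [hfy]
    simp
  have surj : Set.SurjOn (fun w => s(w, (f w).getVert 1)) (↑(S.erase r) : Set V)
      (↑A : Set (Sym2 V)) := by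
    intro e he
    rw [Finset.mem_coe] at he
    obtain ⟨hES, hS⟩ := hA e he
    induction e using Sym2.ind with
    | _ x y =>
      rw [SimpleGraph.mem_edgeSet] at hES
      rcases le_total (f x).length (f y).length with h' | h'
      · obtain ⟨hyr, hv⟩ := key x y hES h'
        refine ⟨y, ?_, ?_⟩
        · simp only [Finset.coe_erase, Set.mem_diff, Set.mem_singleton_iff]
          exact ⟨hS y (by simp), hyr⟩
        · simp only [hv]
          exact Sym2.eq_swap
      · obtain ⟨hxr, hv⟩ := key y x hES.symm h'
        refine ⟨x, ?_, ?_⟩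
        · simp only [Finset.coe_erase, Set.mem_diff, Set.mem_singleton_iff]
          exact ⟨hS x (by simp), hxr⟩
        · simp only [hv]
      
  have := Finset.card_le_card_of_surjOn _ surj
  rw [Finset.card_erase_of_mem hr] at this
  have hpos : 0 < S.card := Finset.card_pos.2 ⟨r, hr⟩
  omega

lemma chi_sum (T F : Finset (Sym2 V)) : ∑ e ∈ F, chi T e = ((F ∩ T).card : ℝ) := by
  simp only [chi, Finset.sum_boole, Finset.filter_mem_eq_inter]

lemma hull_sum_le (G : SimpleGraph V) (x : Sym2 V → ℝ) (hx : x ∈ spanningTreePolytope G)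
    (F : Finset (Sym2 V)) (c : ℝ)
    (h : ∀ T, IsSpanningTree G T → ∑ e ∈ F, chi T e ≤ c) : ∑ e ∈ F, x e ≤ c := by
  have hlin : IsLinearMap ℝ (fun y : Sym2 V → ℝ => ∑ e ∈ F, y e) :=
    ⟨fun a b => by simp [Finset.sum_add_distrib], fun t a => by
      simp [Finset.mul_sum, smul_eq_mul]⟩
  have hconv : Convex ℝ {y : Sym2 V → ℝ | ∑ e ∈ F, y e ≤ c} := convex_halfSpace_le hlin c
  exact convexHull_min (by rintro y ⟨T, hT, rfl⟩; exact h T hT) hconv hx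

lemma hull_sum_ge (G : SimpleGraph V) (x : Sym2 V → ℝ) (hx : x ∈ spanningTreePolytope G)
    (F : Finset (Sym2 V)) (c : ℝ)
    (h : ∀ T, IsSpanningTree G T → c ≤ ∑ e ∈ F, chi T e) : c ≤ ∑ e ∈ F, x e := by
  have hlin : IsLinearMap ℝ (fun y : Sym2 V → ℝ => ∑ e ∈ F, y e) :=
    ⟨fun a b => by simp [Finset.sum_add_distrib], fun t a => by
      simp [Finset.mul_sum, smul_eq_mul]⟩
  have hconv : Convex ℝ {y : Sym2 V → ℝ | c ≤ ∑ e ∈ F, y e} := convex_halfSpace_ge hlin c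
  exact convexHull_min (by rintro y ⟨T, hT, rfl⟩; exact h T hT) hconv hx

lemma sp_nonneg (G : SimpleGraph V) (x : Sym2 V → ℝ) (hx : x ∈ spanningTreePolytope G)
    (e : Sym2 V) : 0 ≤ x e := by
  have := hull_sum_ge G x hx {e} 0 (fun T _ => by
    simp only [Finset.sum_singleton, chi]; positivity)
  simpa using this

lemma spanningTree_card (G : SimpleGraph V) (T : Finset (Sym2 V)) (hT : IsSpanningTree G T) :
    T.card + 1 = Fintype.card V := by
  classical
  obtain ⟨hsub, htree⟩ := hT
  have h := htree.card_edgeFinset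
  have he : (SimpleGraph.fromEdgeSet (T : Set (Sym2 V))).edgeFinset = T := by
    ext e
    simp only [SimpleGraph.mem_edgeFinset, SimpleGraph.edgeSet_fromEdgeSet, Set.mem_diff,
      Finset.mem_coe, Set.mem_setOf_eq]
    constructor
    · rintro ⟨h1, _⟩; exact h1
    · intro h1
      exact ⟨h1, G.not_isDiag_of_mem_edgeSet (hsub h1)⟩
  rwa [he] at h

lemma sp_total (G : SimpleGraph V) (x : Sym2 V → ℝ) (hx : x ∈ spanningTreePolytope G) :
    ∑ e ∈ G.edgeFinset, x e = (Fintype.card V : ℝ) - 1 := by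
  have key : ∀ T, IsSpanningTree G T → ∑ e ∈ G.edgeFinset, chi T e = (Fintype.card V : ℝ) - 1 := by
    intro T hT
    rw [chi_sum]
    have hsub : T ⊆ G.edgeFinset := fun e he =>
      SimpleGraph.mem_edgeFinset.2 (hT.1 he)
    rw [Finset.inter_eq_right.2 hsub]
    have := spanningTree_card G T hT
    have : (T.card : ℝ) + 1 = Fintype.card V := by exact_mod_cast congrArg (Nat.cast (R := ℝ)) this
    linarith
  exact le_antisymm (hull_sum_le G x hx _ _ (fun T hT => (key T hT).le))
    (hull_sum_ge G x hx _ _ (fun T hT => (key T hT).ge))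

lemma sp_induced_le (G : SimpleGraph V) (x : Sym2 V → ℝ) (hx : x ∈ spanningTreePolytope G)
    (W : Finset V) (hW : W.Nonempty) :
    ∑ e ∈ inducedEdges G W, x e ≤ (W.card : ℝ) - 1 := by
  obtain ⟨r, hr⟩ := hW
  apply hull_sum_le G x hx
  intro T hT
  rw [chi_sum]
  have hb := tree_card_edges_in _ hT.2 hr (inducedEdges G W ∩ T) ?_
  · have : ((inducedEdges G W ∩ T).card : ℝ) + 1 ≤ W.card := by exact_mod_cast hb
    linarith
  · intro e he
    obtain ⟨hind, heT⟩ := Finset.mem_inter.1 he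
    obtain ⟨heG, hvW⟩ := Finset.mem_filter.1 hind
    refine ⟨?_, hvW⟩
    rw [SimpleGraph.edgeSet_fromEdgeSet]
    exact ⟨heT, G.not_isDiag_of_mem_edgeSet (SimpleGraph.mem_edgeFinset.1 heG)⟩

lemma cut_eq_filter (G : SimpleGraph V) (A : Finset V) :
    cut G A = G.edgeFinset.filter
      (fun e => ¬(∀ v ∈ e, v ∈ A) ∧ ¬(∀ v ∈ e, v ∈ Aᶜ)) := by
  unfold cut cutBetween
  apply Finset.filter_congr
  intro e he
  induction e using Sym2.ind with
  | _ x y =>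
    simp only [Sym2.mem_iff, Finset.mem_compl]
    constructor
    · rintro ⟨u, v, huv, hu, hv⟩
      rw [Sym2.eq_iff] at huv
      rcases huv with ⟨rfl, rfl⟩ | ⟨rfl, rfl⟩
      · exact ⟨fun h => hv (h y (Or.inr rfl)), fun h => h x (Or.inl rfl) hu⟩
      · exact ⟨fun h => hv (h x (Or.inl rfl)), fun h => h y (Or.inr rfl) hu⟩
    · rintro ⟨h1, h2⟩
      push_neg at h1 h2
      obtain ⟨v1, hv1, hv1A⟩ := h1
      obtain ⟨v2, hv2, hv2A⟩ := h2
      by_cases hv12 : v1 = v2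
      · exact absurd (hv12 ▸ hv2A) hv1A
      refine ⟨v2, v1, ?_, hv2A, hv1A⟩
      rw [Sym2.eq_iff]
      rcases hv1 with h1 | h1 <;> rcases hv2 with h2 | h2 <;> subst h1 <;> subst h2 <;> tauto

lemma sum_edge_split (G : SimpleGraph V) (A : Finset V) (x : Sym2 V → ℝ) :
    ∑ e ∈ G.edgeFinset, x e =
      (∑ e ∈ inducedEdges G A, x e) + (∑ e ∈ cut G A, x e) +
        (∑ e ∈ inducedEdges G Aᶜ, x e) := by
  classical
  have h1 : ∑ e ∈ G.edgeFinset, x e =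
      (∑ e ∈ G.edgeFinset.filter (fun e => ∀ v ∈ e, v ∈ A), x e) +
      (∑ e ∈ G.edgeFinset.filter (fun e => ¬(∀ v ∈ e, v ∈ A)), x e) :=
    (Finset.sum_filter_add_sum_filter_not _ _ _).symm
  have h2 : (∑ e ∈ G.edgeFinset.filter (fun e => ¬(∀ v ∈ e, v ∈ A)), x e) =
      (∑ e ∈ (G.edgeFinset.filter (fun e => ¬(∀ v ∈ e, v ∈ A))).filter
        (fun e => ∀ v ∈ e, v ∈ Aᶜ), x e) +
      (∑ e ∈ (G.edgeFinset.filter (fun e => ¬(∀ v ∈ e, v ∈ A))).filter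
        (fun e => ¬(∀ v ∈ e, v ∈ Aᶜ)), x e) :=
    (Finset.sum_filter_add_sum_filter_not _ _ _).symm
  have e1 : G.edgeFinset.filter (fun e => ∀ v ∈ e, v ∈ A) = inducedEdges G A := rfl
  have e2 : (G.edgeFinset.filter (fun e => ¬(∀ v ∈ e, v ∈ A))).filter
      (fun e => ∀ v ∈ e, v ∈ Aᶜ) = inducedEdges G Aᶜ := by
    rw [Finset.filter_filter]
    unfold inducedEdges
    apply Finset.filter_congr
    intro e he
    induction e using Sym2.ind with
    | _ x y =>
      simp only [Sym2.mem_iff, Finset.mem_compl]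
      constructor
      · rintro ⟨-, h⟩; exact h
      · intro h
        exact ⟨fun hall => h x (Or.inl rfl) (hall x (Or.inl rfl)), h⟩
  have e3 : (G.edgeFinset.filter (fun e => ¬(∀ v ∈ e, v ∈ A))).filter
      (fun e => ¬(∀ v ∈ e, v ∈ Aᶜ)) = cut G A := by
    rw [Finset.filter_filter, cut_eq_filter]
  rw [h1, h2, e1, e2, e3]
  ring

lemma cut_singleton (G : SimpleGraph V) (v : V) :
    cut G {v} = G.edgeFinset.filter (fun e => v ∈ e) := by
  unfold cut cutBetween
  apply Finset.filter_congr
  intro e he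
  induction e using Sym2.ind with
  | _ a b =>
    have hab : a ≠ b := by
      have := G.not_isDiag_of_mem_edgeSet (SimpleGraph.mem_edgeFinset.1 he)
      simpa [Sym2.mk_isDiag_iff] using this
    simp only [Sym2.mem_iff, Finset.mem_compl, Finset.mem_singleton]
    constructor
    · rintro ⟨u, w, huv, rfl, hw⟩
      rw [Sym2.eq_iff] at huv
      rcases huv with ⟨rfl, rfl⟩ | ⟨rfl, rfl⟩
      · exact Or.inl rfl
      · exact Or.inr rfl
    · rintro (rfl | rfl)
      · exact ⟨v, b, rfl, rfl, fun h => hab h.symm⟩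
      · exact ⟨v, a, Sym2.eq_swap, rfl, fun h => hab h⟩

lemma handshake (G : SimpleGraph V) (S : Finset V) (x : Sym2 V → ℝ) :
    ∑ v ∈ S, ∑ e ∈ cut G {v}, x e =
      2 * (∑ e ∈ inducedEdges G S, x e) + ∑ e ∈ cut G S, x e := by
  classical
  have hL : ∀ v, ∑ e ∈ cut G {v}, x e = ∑ e ∈ G.edgeFinset, if v ∈ e then x e else 0 := by
    intro v; rw [cut_singleton, Finset.sum_filter]
  calc ∑ v ∈ S, ∑ e ∈ cut G {v}, x e
      = ∑ e ∈ G.edgeFinset, ∑ v ∈ S, (if v ∈ e then x e else 0) := by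
        simp_rw [hL]; rw [Finset.sum_comm]
    _ = ∑ e ∈ G.edgeFinset, ((2 : ℝ) * (if (∀ v ∈ e, v ∈ S) then x e else 0)
          + (if (¬(∀ v ∈ e, v ∈ S) ∧ ¬(∀ v ∈ e, v ∈ Sᶜ)) then x e else 0)) := by
        apply Finset.sum_congr rfl
        intro e he
        induction e using Sym2.ind with
        | _ a b =>
          have hab : a ≠ b := by
            have := G.not_isDiag_of_mem_edgeSet (SimpleGraph.mem_edgeFinset.1 he)
            simpa [Sym2.mk_isDiag_iff] using this
          have hsplit : ∀ v, (if v ∈ s(a,b) then x s(a,b) else 0)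
              = (if v = a then x s(a,b) else 0) + (if v = b then x s(a,b) else 0) := by
            intro v
            by_cases h1 : v = a <;> by_cases h2 : v = b <;>
              simp_all [Sym2.mem_iff]
          rw [Finset.sum_congr rfl (fun v _ => hsplit v), Finset.sum_add_distrib,
            Finset.sum_ite_eq' S a, Finset.sum_ite_eq' S b]
          by_cases ha : a ∈ S <;> by_cases hb : b ∈ S <;>
            simp [Sym2.mem_iff, ha, hb, hab, Finset.mem_compl] <;> ring
    _ = 2 * (∑ e ∈ inducedEdges G S, x e) + ∑ e ∈ cut G S, x e := by
        rw [Finset.sum_add_distrib, ← Finset.mul_sum, ← Finset.sum_filter, ← Finset.sum_filter,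
          cut_eq_filter]
        rfl

lemma chain_mono (Vc : ℕ → Finset V) (k : ℕ) (hchain : ∀ i < k, Vc i ⊂ Vc (i + 1)) :
    ∀ i j, i ≤ j → j ≤ k → Vc i ⊆ Vc j := by
  intro i j hij hjk
  induction j with
  | zero => rw [Nat.le_zero.1 hij]
  | succ n ih =>
    rcases Nat.lt_or_ge i (n + 1) with h | h
    · exact (ih (Nat.lt_succ_iff.1 h) (le_trans (Nat.le_succ n) hjk)).trans
        (hchain n (Nat.lt_of_succ_le hjk)).subset
    · rw [Nat.le_antisymm hij h]

lemma level_subset (Vc : ℕ → Finset V) (k : ℕ) (i : ℕ) (hi : i ≤ k) :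
    level Vc k i ⊆ Vc i := by
  unfold level
  by_cases h0 : i = 0
  · subst h0; simp
  · rw [if_neg h0, if_pos hi]; exact Finset.sdiff_subset

lemma level_disj (Vc : ℕ → Finset V) (k : ℕ) (hchain : ∀ i < k, Vc i ⊂ Vc (i + 1)) :
    ∀ i j, i < j → j ≤ k + 1 → Disjoint (level Vc k i) (level Vc k j) := by
  intro i j hij hj
  have h1 : level Vc k i ⊆ Vc (j - 1) :=
    (level_subset Vc k i (by omega)).trans (chain_mono Vc k hchain i (j - 1) (by omega) (by omega))
  have h2 : Disjoint (Vc (j - 1)) (level Vc k j) := by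
    unfold level
    rw [if_neg (by omega : j ≠ 0)]
    by_cases hjk : j ≤ k
    · rw [if_pos hjk]; exact Finset.disjoint_sdiff
    · rw [if_neg hjk]
      have : j - 1 = k := by omega
      rw [this]
      exact Finset.disjoint_sdiff
  exact h2.mono_left h1

lemma union_levels (Vc : ℕ → Finset V) (k : ℕ) (hchain : ∀ i < k, Vc i ⊂ Vc (i + 1)) :
    ∀ b, b ≤ k → (Finset.Icc 0 b).biUnion (level Vc k) = Vc b := by
  intro b
  induction b with
  | zero => intro _; simp [level]
  | succ n ih =>
    intro h
    rw [← Finset.insert_Icc_right_eq_Icc_add_one (Nat.zero_le _), Finset.biUnion_insert,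
      ih (by omega)]
    unfold level
    rw [if_neg (Nat.add_one_ne_zero n), if_pos h]
    simp only [Nat.add_sub_cancel]
    rw [Finset.sdiff_union_self_eq_union]
    exact Finset.union_eq_left.2 (hchain n (by omega)).subset

lemma union_levels_top (Vc : ℕ → Finset V) (k : ℕ) (hchain : ∀ i < k, Vc i ⊂ Vc (i + 1)) :
    (Finset.Icc 0 (k + 1)).biUnion (level Vc k) = Finset.univ := by
  rw [← Finset.insert_Icc_right_eq_Icc_add_one (Nat.zero_le _), Finset.biUnion_insert,
    union_levels Vc k hchain k le_rfl]
  unfold level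
  rw [if_neg (Nat.add_one_ne_zero k), if_neg (by omega : ¬k + 1 ≤ k)]
  rw [Finset.sdiff_union_self_eq_union]
  exact Finset.union_eq_left.2 (Finset.subset_univ _)

lemma levels_sdiff (Vc : ℕ → Finset V) (k : ℕ) (hchain : ∀ i < k, Vc i ⊂ Vc (i + 1))
    (a b : ℕ) (ha : 1 ≤ a) (hab : a ≤ b) (hb : b ≤ k + 1) :
    (Finset.Icc a b).biUnion (level Vc k) =
      (Finset.Icc 0 b).biUnion (level Vc k) \ Vc (a - 1) := by
  ext v
  simp only [Finset.mem_biUnion, Finset.mem_Icc, Finset.mem_sdiff]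
  constructor
  · rintro ⟨i, ⟨hai, hib⟩, hv⟩
    refine ⟨⟨i, ⟨Nat.zero_le _, hib⟩, hv⟩, ?_⟩
    have hi1 : i ≠ 0 := by omega
    intro hvA
    unfold level at hv
    rw [if_neg hi1] at hv
    by_cases hik : i ≤ k
    · rw [if_pos hik] at hv
      exact (Finset.mem_sdiff.1 hv).2
        (chain_mono Vc k hchain (a - 1) (i - 1) (by omega) (by omega) hvA)
    · rw [if_neg hik] at hv
      exact (Finset.mem_sdiff.1 hv).2
        (chain_mono Vc k hchain (a - 1) k (by omega) le_rfl hvA)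
  · rintro ⟨⟨j, ⟨-, hjb⟩, hv⟩, hnv⟩
    refine ⟨j, ⟨?_, hjb⟩, hv⟩
    by_contra hja
    push_neg at hja
    exact hnv (chain_mono Vc k hchain j (a - 1) (by omega) (by omega)
      (level_subset Vc k j (by omega) hv))

lemma level_nonempty (Vc : ℕ → Finset V) (k : ℕ) (hne : (Vc 0).Nonempty)
    (hchain : ∀ i < k, Vc i ⊂ Vc (i + 1)) (htop : Vc k ⊂ Finset.univ)
    (i : ℕ) (hi : i ≤ k + 1) : (level Vc k i).Nonempty := by
  unfold level
  by_cases h0 : i = 0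
  · rw [if_pos h0]; exact hne
  · rw [if_neg h0]
    by_cases hik : i ≤ k
    · rw [if_pos hik]
      have hss := hchain (i - 1) (by omega)
      rw [show i - 1 + 1 = i by omega] at hss
      obtain ⟨w, hw1, hw2⟩ := Finset.exists_of_ssubset hss
      exact ⟨w, Finset.mem_sdiff.2 ⟨hw1, hw2⟩⟩
    · rw [if_neg hik]
      obtain ⟨w, hw1, hw2⟩ := Finset.exists_of_ssubset htop
      exact ⟨w, Finset.mem_sdiff.2 ⟨hw1, hw2⟩⟩

theorem stmt7 (G : SimpleGraph V) (hG : G.Connected)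
    (Vc : ℕ → Finset V) (k : ℕ)
    (hne : (Vc 0).Nonempty) (hchain : ∀ i < k, Vc i ⊂ Vc (i + 1))
    (htop : Vc k ⊂ Finset.univ)
    (x : Sym2 V → ℝ) (hx : IsChainPoint G Vc k x)
    (a b : ℕ) (hab : a ≤ b) (hb : b ≤ k + 1)
    (S : Finset V) (hS : S = (Finset.Icc a b).biUnion (level Vc k)) :
    (S.card : ℝ) - 2 < ∑ e ∈ inducedEdges G S, x e ∧
    (∑ e ∈ inducedEdges G S, x e) ≤ (S.card : ℝ) - 1 := by
  obtain ⟨hsp, h0, hk, hlt2, hdeg⟩ := hx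
  have hnn : ∀ e, 0 ≤ x e := sp_nonneg G x hsp
  have htot := sp_total G x hsp
  have hcutlt : ∀ i ≤ k, ∑ e ∈ cut G (Vc i), x e < 2 := by
    intro i hi
    by_cases hi0 : i = 0
    · rw [hi0, h0]; norm_num
    by_cases hik : i = k
    · rw [hik, hk]; norm_num
    · exact hlt2 i (by omega) (by omega)
  have hSne : S.Nonempty := by
    obtain ⟨w, hw⟩ := level_nonempty Vc k hne hchain htop a (by omega)
    exact ⟨w, hS ▸ Finset.mem_biUnion.2 ⟨a, Finset.mem_Icc.2 ⟨le_rfl, hab⟩, hw⟩⟩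
  refine ⟨?_, sp_induced_le G x hsp S hSne⟩
  by_cases ha0 : a = 0
  · by_cases hbk : b = k + 1
    · subst ha0; subst hbk
      rw [hS, union_levels_top Vc k hchain]
      have huniv : inducedEdges G Finset.univ = G.edgeFinset :=
        Finset.filter_true_of_mem (fun e _ => fun v _ => Finset.mem_univ v)
      rw [huniv, htot, Finset.card_univ]
      linarith
    · subst ha0
      have hbk' : b ≤ k := by omega
      have hSeq : S = Vc b := by rw [hS]; exact union_levels Vc k hchain b hbk'
      have hsplit := sum_edge_split G (Vc b) x
      have hcompl_ne : ((Vc b)ᶜ : Finset V).Nonempty := by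
        obtain ⟨w, hw1, hw2⟩ := Finset.exists_of_ssubset htop
        exact ⟨w, Finset.mem_compl.2
          (fun hw => hw2 (chain_mono Vc k hchain b k hbk' le_rfl hw))⟩
      have h1 := sp_induced_le G x hsp ((Vc b)ᶜ) hcompl_ne
      have h2 := hcutlt b hbk'
      have h3 : (Vc b).card ≤ Fintype.card V := Finset.card_le_univ _
      have hccard : ((((Vc b)ᶜ : Finset V)).card : ℝ)
          = (Fintype.card V : ℝ) - (Vc b).card := by
        rw [Finset.card_compl, Nat.cast_sub h3]
      rw [hSeq]
      linarith
  · by_cases hbk : b = k + 1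
    · subst hbk
      have hSeq : S = (Vc (a - 1))ᶜ := by
        rw [hS, levels_sdiff Vc k hchain a (k + 1) (by omega) hab le_rfl,
          union_levels_top Vc k hchain, ← Finset.compl_eq_univ_sdiff]
      have hA_ne : (Vc (a - 1)).Nonempty :=
        hne.mono (chain_mono Vc k hchain 0 (a - 1) (Nat.zero_le _) (by omega))
      have hsplit := sum_edge_split G (Vc (a - 1)) x
      have h1 := sp_induced_le G x hsp (Vc (a - 1)) hA_ne
      have h2 := hcutlt (a - 1) (by omega)
      have h3 : (Vc (a - 1)).card ≤ Fintype.card V := Finset.card_le_univ _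
      have hccard : ((((Vc (a - 1))ᶜ : Finset V)).card : ℝ)
          = (Fintype.card V : ℝ) - (Vc (a - 1)).card := by
        rw [Finset.card_compl, Nat.cast_sub h3]
      rw [hSeq]
      linarith
    · have hbk' : b ≤ k := by omega
      have hSeq : S = Vc b \ Vc (a - 1) := by
        rw [hS, levels_sdiff Vc k hchain a b (by omega) hab (by omega),
          union_levels Vc k hchain b hbk']
      have hdisj : Set.PairwiseDisjoint ↑(Finset.Icc a b) (level Vc k) := by
        intro i hi j hj hij
        rw [Finset.coe_Icc, Set.mem_Icc] at hi hj
        rcases Nat.lt_or_ge i j with h | h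
        · exact level_disj Vc k hchain i j h (by omega)
        · exact (level_disj Vc k hchain j i (by omega) (by omega)).symm
      have hD : ∑ v ∈ S, ∑ e ∈ cut G {v}, x e = 2 * (S.card : ℝ) := by
        rw [hS, Finset.sum_biUnion hdisj,
          Finset.sum_congr rfl (fun i hi => hdeg i
            (by rw [Finset.mem_Icc] at hi; omega) (by rw [Finset.mem_Icc] at hi; omega)),
          Finset.card_biUnion (fun i hi j hj hij => hdisj hi hj hij)]
        rw [← Finset.mul_sum]
        push_cast
        ring
      have hhs := handshake G S x
      have hsub : cut G S ⊆ cut G (Vc (a - 1)) ∪ cut G (Vc b) := by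
        intro e he
        unfold cut cutBetween at he ⊢
        obtain ⟨heG, u, v, rfl, hu, hv⟩ := Finset.mem_filter.1 he
        rw [Finset.mem_compl, hSeq, Finset.mem_sdiff] at hv
        rw [hSeq, Finset.mem_sdiff] at hu
        rw [Finset.mem_union]
        by_cases hvA : v ∈ Vc (a - 1)
        · exact Or.inl (Finset.mem_filter.2 ⟨heG,
            v, u, Sym2.eq_swap, hvA, Finset.mem_compl.2 hu.2⟩)
        · refine Or.inr (Finset.mem_filter.2 ⟨heG, u, v, rfl, hu.1, Finset.mem_compl.2 ?_⟩)
          intro hvb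
          exact hv ⟨hvb, hvA⟩
      have hcs : ∑ e ∈ cut G S, x e ≤
          (∑ e ∈ cut G (Vc (a - 1)), x e) + ∑ e ∈ cut G (Vc b), x e := by
        have hstep : ∑ e ∈ cut G S, x e ≤ ∑ e ∈ cut G (Vc (a - 1)) ∪ cut G (Vc b), x e :=
          Finset.sum_le_sum_of_subset_of_nonneg hsub (fun e _ _ => hnn e)
        have hui := Finset.sum_union_inter (s₁ := cut G (Vc (a - 1))) (s₂ := cut G (Vc b)) (f := x)
        have hni : 0 ≤ ∑ e ∈ cut G (Vc (a - 1)) ∩ cut G (Vc b), x e :=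
          Finset.sum_nonneg (fun e _ => hnn e)
        linarith
      have h2a := hcutlt (a - 1) (by omega)
      have h2b := hcutlt b hbk'
      linarith
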